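/- For every R ∈ 𝔯(V), writing Ric := Ric(R), Ric* := Ric*(R), τ := τ(R): (1) Ric(α₁(R)) = (τ/n) g; (2) Ric(α₂(R)) = −(τ/n) g + (1/2) S(Ric + Ric*); (3) Ric(α₃(R)) = (1/2) S(Ric − Ric*); (4) Ric(α₄(R)) = (1/4) Λ(3Ric − Ric*); (5) Ric(α₅(R)) = (1/4) Λ(Ric + Ric*); (6) Ric(α_j(R)) = 0 for j = 6, 7, 8; (7) the g-trace of Ric(α_j(R)) vanishes for j = 2, …, 8. -/

import Mathlib

open scoped BigOperators
open Pointwise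

namespace GCT

variable {V : Type*} [AddCommGroup V] [Module ℝ V]

/-- Linearity of a real valued function of one vector variable. -/
def IsLin (f : V → ℝ) : Prop :=
  (∀ x y : V, f (x + y) = f x + f y) ∧ (∀ (c : ℝ) (x : V), f (c • x) = c * f x)

/-- Bilinearity. -/
def IsBilin (h : V → V → ℝ) : Prop :=
  (∀ y, IsLin (fun x => h x y)) ∧ (∀ x, IsLin (fun y => h x y))

/-- 4-linearity. -/
def IsMulti4 (F : V → V → V → V → ℝ) : Prop :=
  (∀ y z w, IsLin (fun x => F x y z w)) ∧ (∀ x z w, IsLin (fun y => F x y z w)) ∧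
    (∀ x y w, IsLin (fun z => F x y z w)) ∧ (∀ x y z, IsLin (fun w => F x y z w))

/-- The space 𝔯(V) of generalized curvature tensors. -/
def rSet (V : Type*) [AddCommGroup V] [Module ℝ V] : Set (V → V → V → V → ℝ) :=
  {F | IsMulti4 F ∧ (∀ x y z w, F x y z w = - F y x z w) ∧
    (∀ x y z w, F x y z w + F y z x w + F z x y w = 0)}

/-- The space 𝔞(V) of algebraic curvature tensors. -/
def aSet (V : Type*) [AddCommGroup V] [Module ℝ V] : Set (V → V → V → V → ℝ) :=
  {F | F ∈ rSet V ∧ ∀ x y z w, F x y z w = - F x y w z}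

/-- The space 𝔰(V). -/
def sSet (V : Type*) [AddCommGroup V] [Module ℝ V] : Set (V → V → V → V → ℝ) :=
  {F | F ∈ rSet V ∧ ∀ x y z w, F x y z w = F x y w z}

/-- The conjugate tensor R*. -/
def conj (F : V → V → V → V → ℝ) : V → V → V → V → ℝ := fun x y z w => - F x y w z

/-- The product h·k of two bilinear forms. -/
def prodB (h k : V → V → ℝ) : V → V → V → V → ℝ := fun x y z w => h x y * k z w

/-- The wedge product h ∧_t k of two bilinear forms. -/
def wedge (t : ℝ) (h k : V → V → ℝ) : V → V → V → V → ℝ :=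
  fun x y z w => h x z * k y w - h y z * k x w - t * (h x w * k y z - h y w * k x z)

/-- Antisymmetric part Λh. -/
noncomputable def lamB (h : V → V → ℝ) : V → V → ℝ := fun x y => (h x y - h y x) / 2

/-- Symmetric part Sh. -/
noncomputable def symB (h : V → V → ℝ) : V → V → ℝ := fun x y => (h x y + h y x) / 2

/-- The idempotent ψ. -/
noncomputable def psi (F : V → V → V → V → ℝ) : V → V → V → V → ℝ :=
  fun x y z w => (F x y z w + F y x w z + F z w x y + F w z y x) / 4

/-- The idempotent μ. -/
noncomputable def mu (F : V → V → V → V → ℝ) : V → V → V → V → ℝ :=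
  fun x y z w =>
    (3 * F x y z w + 3 * F x y w z + F x w z y + F x z w y + F w y z x + F z y w x) / 8

/-- A linear equivalence is a g-isometry. -/
def IsIsometry (g : V → V → ℝ) (φ : V ≃ₗ[ℝ] V) : Prop := ∀ x y, g (φ x) (φ y) = g x y

/-- Pull back of a 4-tensor along a linear equivalence (the natural action). -/
def pullT (φ : V ≃ₗ[ℝ] V) (F : V → V → V → V → ℝ) : V → V → V → V → ℝ :=
  fun x y z w => F (φ x) (φ y) (φ z) (φ w)

/-- Invariance of a set of 4-tensors under the orthogonal group O(V,g). -/
def OInv (g : V → V → ℝ) (S : Set (V → V → V → V → ℝ)) : Prop :=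
  ∀ φ : V ≃ₗ[ℝ] V, IsIsometry g φ → ∀ F ∈ S, pullT φ F ∈ S

/-- Irreducibility of a subspace of 4-tensors as an O(V,g)-module:
there is no proper nonzero invariant subspace. -/
def OIrred (g : V → V → ℝ) (W : Set (V → V → V → V → ℝ)) : Prop :=
  ∀ U : Submodule ℝ (V → V → V → V → ℝ), (U : Set (V → V → V → V → ℝ)) ⊆ W →
    (∀ φ : V ≃ₗ[ℝ] V, IsIsometry g φ → ∀ F ∈ U, pullT φ F ∈ U) →
    (U : Set (V → V → V → V → ℝ)) = {0} ∨ (U : Set (V → V → V → V → ℝ)) = W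

/-- Isomorphism of two invariant subspaces as O(V,g)-modules. -/
def OEquivMod (g : V → V → ℝ) (S T : Set (V → V → V → V → ℝ)) : Prop :=
  ∃ e : (V → V → V → V → ℝ) →ₗ[ℝ] (V → V → V → V → ℝ),
    Set.BijOn e S T ∧
      ∀ φ : V ≃ₗ[ℝ] V, IsIsometry g φ → ∀ F ∈ S, e (pullT φ F) = pullT φ (e F)

variable (n : ℕ) (b : Module.Basis (Fin n) ℝ V) (g : V → V → ℝ)

/-- Inverse metric components g^{ij}. -/
noncomputable def ginv : Matrix (Fin n) (Fin n) ℝ :=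
  (Matrix.of fun i j => g (b i) (b j))⁻¹

/-- Ric(R)(x,y) := Σ g^{ij} R(e_i,x,y,e_j). -/
noncomputable def Ric (F : V → V → V → V → ℝ) : V → V → ℝ :=
  fun x y => ∑ i, ∑ j, ginv n b g i j * F (b i) x y (b j)

/-- Ric*(R)(x,y) := Σ g^{ij} R(x,e_i,e_j,y). -/
noncomputable def RicS (F : V → V → V → V → ℝ) : V → V → ℝ :=
  fun x y => ∑ i, ∑ j, ginv n b g i j * F x (b i) (b j) y

/-- The generalized scalar curvature τ(R). -/
noncomputable def tau (F : V → V → V → V → ℝ) : ℝ :=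
  ∑ i, ∑ j, ∑ k, ∑ l, ginv n b g i l * ginv n b g j k * F (b i) (b j) (b k) (b l)

/-- The g-trace of a bilinear form. -/
noncomputable def trg (h : V → V → ℝ) : ℝ := ∑ i, ∑ j, ginv n b g i j * h (b i) (b j)

/-- The scalar product on 4-tensors given by full contraction with g. -/
noncomputable def inner4 (F T : V → V → V → V → ℝ) : ℝ :=
  ∑ i, ∑ j, ∑ k, ∑ l, ∑ i', ∑ j', ∑ k', ∑ l',
    ginv n b g i i' * ginv n b g j j' * ginv n b g k k' * ginv n b g l l' *
      F (b i) (b j) (b k) (b l) * T (b i') (b j') (b k') (b l')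

/-- W-projection π₁. -/
noncomputable def pi1 (F : V → V → V → V → ℝ) : V → V → V → V → ℝ :=
  (-(tau n b g F) / ((n : ℝ) * ((n : ℝ) - 1))) • wedge 0 g g

/-- W-projection π₂. -/
noncomputable def pi2 (F : V → V → V → V → ℝ) : V → V → V → V → ℝ :=
  ((1 : ℝ) / ((n : ℝ) - 1)) • wedge 0 (((tau n b g F) / (n : ℝ)) • g - symB (Ric n b g F)) g

/-- W-projection π₃. -/
noncomputable def pi3 (F : V → V → V → V → ℝ) : V → V → V → V → ℝ :=
  ((-1 : ℝ) / ((n : ℝ) + 1)) •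
    ((2 : ℝ) • prodB (lamB (Ric n b g F)) g + wedge 0 (lamB (Ric n b g F)) g)

/-- W-projection π₄. -/
noncomputable def pi4 (F : V → V → V → V → ℝ) : V → V → V → V → ℝ :=
  ((-1 : ℝ) / ((n : ℝ) ^ 2 - 4)) •
      ((2 : ℝ) • prodB (lamB (RicS n b g F)) g + wedge ((n : ℝ) + 1) (lamB (RicS n b g F)) g)
    - ((3 : ℝ) / (((n : ℝ) ^ 2 - 4) * ((n : ℝ) + 1))) •
      ((2 : ℝ) • prodB (lamB (Ric n b g F)) g + wedge ((n : ℝ) + 1) (lamB (Ric n b g F)) g)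

/-- W-projection π₅. -/
noncomputable def pi5 (F : V → V → V → V → ℝ) : V → V → V → V → ℝ :=
  ((1 : ℝ) / (((n : ℝ) - 1) * ((n : ℝ) - 2))) •
    ((tau n b g F) • wedge 0 g g -
      ((1 : ℝ) / (n : ℝ)) •
        wedge ((n : ℝ) - 1) (symB (Ric n b g F + ((n : ℝ) - 1) • RicS n b g F)) g)

/-- W-projection π₆. -/
noncomputable def pi6 (F : V → V → V → V → ℝ) : V → V → V → V → ℝ :=
  psi F + ((1 : ℝ) / (2 * ((n : ℝ) - 2))) • wedge 1 (symB (Ric n b g F + RicS n b g F)) g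
    - ((tau n b g F) / (((n : ℝ) - 1) * ((n : ℝ) - 2))) • wedge 0 g g

/-- W-projection π₇. -/
noncomputable def pi7 (F : V → V → V → V → ℝ) : V → V → V → V → ℝ :=
  mu F + ((1 : ℝ) / (2 * (n : ℝ))) • wedge (-1) (symB (Ric n b g F - RicS n b g F)) g
    + ((1 : ℝ) / (2 * ((n : ℝ) + 2))) • prodB (lamB ((3 : ℝ) • Ric n b g F - RicS n b g F)) g
    + ((1 : ℝ) / (4 * ((n : ℝ) + 2))) • wedge (-1) (lamB ((3 : ℝ) • Ric n b g F - RicS n b g F)) g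

/-- W-projection π₈. -/
noncomputable def pi8 (F : V → V → V → V → ℝ) : V → V → V → V → ℝ :=
  F - psi F - mu F
    + ((1 : ℝ) / (2 * ((n : ℝ) - 2))) • prodB (lamB (Ric n b g F + RicS n b g F)) g
    + ((1 : ℝ) / (4 * ((n : ℝ) - 2))) • wedge 3 (lamB (Ric n b g F + RicS n b g F)) g

/-- A-projection α₁. -/
noncomputable def al1 (F : V → V → V → V → ℝ) : V → V → V → V → ℝ :=
  (-(tau n b g F) / ((n : ℝ) * ((n : ℝ) - 1))) • wedge 0 g g

/-- A-projection α₂. -/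
noncomputable def al2 (F : V → V → V → V → ℝ) : V → V → V → V → ℝ :=
  ((-1 : ℝ) / (2 * ((n : ℝ) - 2))) • wedge 1 (symB (Ric n b g F + RicS n b g F)) g
    + ((2 * tau n b g F) / ((n : ℝ) * ((n : ℝ) - 2))) • wedge 0 g g

/-- A-projection α₃. -/
noncomputable def al3 (F : V → V → V → V → ℝ) : V → V → V → V → ℝ :=
  ((-1 : ℝ) / (2 * (n : ℝ))) • wedge (-1) (symB (Ric n b g F - RicS n b g F)) g

/-- A-projection α₄. -/
noncomputable def al4 (F : V → V → V → V → ℝ) : V → V → V → V → ℝ :=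
  ((-1 : ℝ) / (4 * ((n : ℝ) + 2))) •
    ((2 : ℝ) • prodB (lamB ((3 : ℝ) • Ric n b g F - RicS n b g F)) g
      + wedge (-1) (lamB ((3 : ℝ) • Ric n b g F - RicS n b g F)) g)

/-- A-projection α₅. -/
noncomputable def al5 (F : V → V → V → V → ℝ) : V → V → V → V → ℝ :=
  ((-1 : ℝ) / (4 * ((n : ℝ) - 2))) •
    ((2 : ℝ) • prodB (lamB (Ric n b g F + RicS n b g F)) g
      + wedge 3 (lamB (Ric n b g F + RicS n b g F)) g)

/-- A-projection α₆. -/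
noncomputable def al6 (F : V → V → V → V → ℝ) : V → V → V → V → ℝ :=
  psi F - al1 n b g F - al2 n b g F

/-- A-projection α₇. -/
noncomputable def al7 (F : V → V → V → V → ℝ) : V → V → V → V → ℝ :=
  mu F - al3 n b g F - al4 n b g F

/-- A-projection α₈. -/
noncomputable def al8 (F : V → V → V → V → ℝ) : V → V → V → V → ℝ :=
  F - mu F - psi F - al5 n b g F

/-- Curvature tensors of constant curvature type. -/
noncomputable def uSet : Set (V → V → V → V → ℝ) :=
  {F | ∃ c : ℝ, ∀ x y z w, F x y z w = c * (g x w * g y z - g x z * g y w)}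

/-- Ricci traceless algebraic curvature tensors built from a traceless symmetric form. -/
noncomputable def zSet : Set (V → V → V → V → ℝ) :=
  {F | ∃ Xi : V → V → ℝ, IsBilin Xi ∧ (∀ x y, Xi x y = Xi y x) ∧ trg n b g Xi = 0 ∧
    ∀ x y z w, F x y z w = Xi x w * g y z + g x w * Xi y z - Xi x z * g y w - g x z * Xi y w}

/-- Weyl type (Ricci flat algebraic) curvature tensors. -/
noncomputable def wSet : Set (V → V → V → V → ℝ) :=
  {F | F ∈ aSet V ∧ Ric n b g F = fun _ _ => 0}

/-- The projective curvature tensor p(R). -/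
noncomputable def pProj (F : V → V → V → V → ℝ) : V → V → V → V → ℝ :=
  F - pi1 n b g F - pi2 n b g F - pi3 n b g F

/-! ### Auxiliary lemmas -/

section Aux

variable {V₀ : Type*} [AddCommGroup V₀] [Module ℝ V₀]

lemma IsLin.zero' {f : V₀ → ℝ} (hf : IsLin f) : f 0 = 0 := by
  have := hf.2 0 0
  simpa using this

lemma IsLin.map_sum' {f : V₀ → ℝ} (hf : IsLin f) {ι : Type*} (s : Finset ι)
    (c : ι → ℝ) (v : ι → V₀) :
    f (∑ i ∈ s, c i • v i) = ∑ i ∈ s, c i * f (v i) := by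
  classical
  induction s using Finset.induction_on with
  | empty => simpa using hf.zero'
  | insert a s h ih => rw [Finset.sum_insert h, hf.1, hf.2, ih, Finset.sum_insert h]

variable (n : ℕ) (b : Module.Basis (Fin n) ℝ V₀) (g : V₀ → V₀ → ℝ)

lemma gmat_det_ne_zero (hgb : IsBilin g) (hgs : ∀ x y, g x y = g y x)
    (hgnd : ∀ x : V₀, (∀ y : V₀, g x y = 0) → x = 0) :
    (Matrix.of fun i j => g (b i) (b j)).det ≠ 0 := by
  intro hdet
  obtain ⟨v, hv, hmv⟩ := Matrix.exists_mulVec_eq_zero_iff.mpr hdet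
  apply hv
  have hx : (∑ j, v j • b j) = 0 := by
    apply hgnd
    have hxi : ∀ i, g (∑ j, v j • b j) (b i) = 0 := by
      intro i
      have h1 : g (∑ j, v j • b j) (b i) = ∑ j, v j * g (b j) (b i) :=
        (hgb.1 (b i)).map_sum' _ _ _
      have h2 := congrFun hmv i
      simp only [Matrix.mulVec, dotProduct, Matrix.of_apply, Pi.zero_apply] at h2
      rw [h1]
      rw [show (∑ j, v j * g (b j) (b i)) = ∑ j, g (b i) (b j) * v j from
        Finset.sum_congr rfl fun j _ => by rw [hgs (b j) (b i)]; ring]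
      exact h2
    intro y
    have h3 : g y (∑ j, v j • b j) = 0 := by
      conv_lhs => rw [← b.sum_repr y]
      rw [(hgb.1 (∑ j, v j • b j)).map_sum' _ _ _]
      refine Finset.sum_eq_zero fun k _ => ?_
      rw [hgs (b k) _, hxi k, mul_zero]
    rw [hgs]; exact h3
  exact funext (Fintype.linearIndependent_iff.mp b.linearIndependent v hx)

lemma ginv_mul_eq (hgb : IsBilin g) (hgs : ∀ x y, g x y = g y x)
    (hgnd : ∀ x : V₀, (∀ y : V₀, g x y = 0) → x = 0) (i k : Fin n) :
    (∑ j, ginv n b g i j * g (b j) (b k)) = if i = k then 1 else 0 := by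
  have h := Matrix.nonsing_inv_mul (Matrix.of fun i j => g (b i) (b j))
    (isUnit_iff_ne_zero.mpr (gmat_det_ne_zero n b g hgb hgs hgnd))
  have h2 := congrFun (congrFun h i) k
  simpa [Matrix.mul_apply, Matrix.one_apply, ginv] using h2

lemma ginv_symm (hgs : ∀ x y, g x y = g y x) (i j : Fin n) :
    ginv n b g i j = ginv n b g j i := by
  have hG : Matrix.transpose (Matrix.of fun i j => g (b i) (b j))
      = Matrix.of fun i j => g (b i) (b j) := by
    ext i j
    simp only [Matrix.transpose_apply, Matrix.of_apply]
    exact hgs (b j) (b i)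
  have h := Matrix.transpose_nonsing_inv (Matrix.of fun i j => g (b i) (b j))
  rw [hG] at h
  have h2 := congrFun (congrFun h i) j
  simpa [Matrix.transpose_apply, ginv] using h2.symm

lemma swap_sum (hgs : ∀ x y, g x y = g y x) (f : Fin n → Fin n → ℝ) :
    (∑ i, ∑ j, ginv n b g i j * f i j) = ∑ i, ∑ j, ginv n b g i j * f j i := by
  rw [Finset.sum_comm]
  exact Finset.sum_congr rfl fun i _ => Finset.sum_congr rfl fun j _ => by
    rw [ginv_symm n b g hgs]

lemma contractA (hgb : IsBilin g) (hgs : ∀ x y, g x y = g y x)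
    (hgnd : ∀ x : V₀, (∀ y : V₀, g x y = 0) → x = 0) (f : V₀ → ℝ) (hf : IsLin f) (x : V₀) :
    (∑ i, ∑ j, ginv n b g i j * (g x (b j) * f (b i))) = f x := by
  have hxj : ∀ j, g x (b j) = ∑ k, b.repr x k * g (b k) (b j) := by
    intro j
    conv_lhs => rw [← b.sum_repr x]
    exact (hgb.1 (b j)).map_sum' _ _ _
  have main : ∀ i, (∑ j, ginv n b g i j * (g x (b j) * f (b i)))
      = b.repr x i * f (b i) := by
    intro i
    have step1 : (∑ j, ginv n b g i j * (g x (b j) * f (b i)))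
        = ∑ j, ∑ k, b.repr x k * f (b i) * (ginv n b g i j * g (b j) (b k)) := by
      refine Finset.sum_congr rfl fun j _ => ?_
      rw [hxj j, Finset.sum_mul, Finset.mul_sum]
      refine Finset.sum_congr rfl fun k _ => ?_
      rw [hgs (b k) (b j)]; ring
    rw [step1, Finset.sum_comm]
    have step2 : ∀ k, (∑ j, b.repr x k * f (b i) * (ginv n b g i j * g (b j) (b k)))
        = b.repr x k * f (b i) * (if i = k then 1 else 0) := by
      intro k
      rw [← Finset.mul_sum, ginv_mul_eq n b g hgb hgs hgnd i k]
    simp only [step2, mul_ite, mul_one, mul_zero]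
    simp [Finset.sum_ite_eq]
  rw [Finset.sum_congr rfl fun i _ => main i]
  have := hf.map_sum' Finset.univ (fun i => b.repr x i) (fun i => b i)
  rw [b.sum_repr x] at this
  exact this.symm

lemma contractB (hgb : IsBilin g) (hgs : ∀ x y, g x y = g y x)
    (hgnd : ∀ x : V₀, (∀ y : V₀, g x y = 0) → x = 0) (f : V₀ → ℝ) (hf : IsLin f) (y : V₀) :
    (∑ i, ∑ j, ginv n b g i j * (g (b i) y * f (b j))) = f y := by
  have h : (∑ i, ∑ j, ginv n b g i j * (g (b i) y * f (b j)))
      = ∑ i, ∑ j, ginv n b g i j * (g (b j) y * f (b i)) :=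
    swap_sum n b g hgs fun i j => g (b i) y * f (b j)
  rw [h]
  rw [Finset.sum_congr rfl fun i _ => Finset.sum_congr rfl fun j _ => by
    rw [hgs (b j) y]]
  exact contractA n b g hgb hgs hgnd f hf y

lemma trace_g (hgb : IsBilin g) (hgs : ∀ x y, g x y = g y x)
    (hgnd : ∀ x : V₀, (∀ y : V₀, g x y = 0) → x = 0) :
    (∑ i, ∑ j, ginv n b g i j * g (b i) (b j)) = (n : ℝ) := by
  have h : ∀ i, (∑ j, ginv n b g i j * g (b i) (b j)) = 1 := by
    intro i
    have h0 := ginv_mul_eq n b g hgb hgs hgnd i i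
    rw [if_pos rfl] at h0
    rw [← h0]
    exact Finset.sum_congr rfl fun j _ => by rw [hgs (b i) (b j)]
  simp [h]

lemma Ric_add' (F₁ F₂ : V₀ → V₀ → V₀ → V₀ → ℝ) (x y : V₀) :
    Ric n b g (F₁ + F₂) x y = Ric n b g F₁ x y + Ric n b g F₂ x y := by
  simp only [Ric, Pi.add_apply, mul_add, Finset.sum_add_distrib]

lemma Ric_sub' (F₁ F₂ : V₀ → V₀ → V₀ → V₀ → ℝ) (x y : V₀) :
    Ric n b g (F₁ - F₂) x y = Ric n b g F₁ x y - Ric n b g F₂ x y := by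
  simp only [Ric, Pi.sub_apply, mul_sub, Finset.sum_sub_distrib]

lemma Ric_smul' (c : ℝ) (F : V₀ → V₀ → V₀ → V₀ → ℝ) (x y : V₀) :
    Ric n b g (c • F) x y = c * Ric n b g F x y := by
  simp only [Ric, Pi.smul_apply, smul_eq_mul, Finset.mul_sum]
  exact Finset.sum_congr rfl fun i _ => Finset.sum_congr rfl fun j _ => by ring

lemma Ric_wedge' (hgb : IsBilin g) (hgs : ∀ x y, g x y = g y x)
    (hgnd : ∀ x : V₀, (∀ y : V₀, g x y = 0) → x = 0)
    (t : ℝ) (h : V₀ → V₀ → ℝ) (hh : IsBilin h) (x y : V₀) :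
    Ric n b g (wedge t h g) x y
      = (1 + t - (n : ℝ)) * h x y - t * trg n b g h * g x y := by
  have e1 : (∑ i, ∑ j, ginv n b g i j * (g x (b j) * h (b i) y)) = h x y :=
    contractA n b g hgb hgs hgnd (fun v => h v y) (hh.1 y) x
  have e2 : (∑ i, ∑ j, ginv n b g i j * (g (b i) y * h x (b j))) = h x y :=
    contractB n b g hgb hgs hgnd (fun v => h x v) (hh.2 x) y
  have e3 : (∑ i, ∑ j, ginv n b g i j * g (b i) (b j)) = (n : ℝ) :=
    trace_g n b g hgb hgs hgnd
  have e4 : (∑ i, ∑ j, ginv n b g i j * h (b i) (b j)) = trg n b g h := rfl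
  have expand : ∀ i j : Fin n, ginv n b g i j * wedge t h g (b i) x y (b j)
      = ginv n b g i j * (g x (b j) * h (b i) y)
        - h x y * (ginv n b g i j * g (b i) (b j))
        - (t * g x y) * (ginv n b g i j * h (b i) (b j))
        + t * (ginv n b g i j * (g (b i) y * h x (b j))) := by
    intro i j; simp only [wedge]; ring
  have main : Ric n b g (wedge t h g) x y
      = (∑ i, ∑ j, ginv n b g i j * (g x (b j) * h (b i) y))
        - h x y * (∑ i, ∑ j, ginv n b g i j * g (b i) (b j))
        - (t * g x y) * (∑ i, ∑ j, ginv n b g i j * h (b i) (b j))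
        + t * (∑ i, ∑ j, ginv n b g i j * (g (b i) y * h x (b j))) := by
    simp only [Ric]
    rw [Finset.sum_congr rfl fun i _ => Finset.sum_congr rfl fun j _ => expand i j]
    simp only [Finset.sum_add_distrib, Finset.sum_sub_distrib, ← Finset.mul_sum]
  rw [main, e1, e2, e3, e4]; ring

lemma Ric_prodB' (hgb : IsBilin g) (hgs : ∀ x y, g x y = g y x)
    (hgnd : ∀ x : V₀, (∀ y : V₀, g x y = 0) → x = 0)
    (h : V₀ → V₀ → ℝ) (hh : IsBilin h) (x y : V₀) :
    Ric n b g (prodB h g) x y = h y x := by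
  have main : Ric n b g (prodB h g) x y
      = ∑ i, ∑ j, ginv n b g i j * (g y (b j) * h (b i) x) := by
    simp only [Ric, prodB]
    exact Finset.sum_congr rfl fun i _ => Finset.sum_congr rfl fun j _ => by ring
  rw [main]
  exact contractA n b g hgb hgs hgnd (fun v => h v x) (hh.1 x) y

section RContract

variable (F : V₀ → V₀ → V₀ → V₀ → ℝ)

lemma contract12 (hgs : ∀ x y, g x y = g y x) (hA : ∀ x y z w, F x y z w = - F y x z w) (x y : V₀) :
    (∑ i, ∑ j, ginv n b g i j * F (b i) (b j) x y) = 0 := by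
  have h : (∑ i, ∑ j, ginv n b g i j * F (b i) (b j) x y)
      = ∑ i, ∑ j, ginv n b g i j * F (b j) (b i) x y :=
    swap_sum n b g hgs fun i j => F (b i) (b j) x y
  have h2 : (∑ i, ∑ j, ginv n b g i j * F (b j) (b i) x y)
      = -∑ i, ∑ j, ginv n b g i j * F (b i) (b j) x y := by
    rw [← Finset.sum_neg_distrib]
    refine Finset.sum_congr rfl fun i _ => ?_
    rw [← Finset.sum_neg_distrib]
    refine Finset.sum_congr rfl fun j _ => ?_
    rw [hA (b j) (b i) x y]; ring
  have h3 := h.trans h2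
  linarith

lemma contract_b (hA : ∀ x y z w, F x y z w = - F y x z w) (x y : V₀) :
    (∑ i, ∑ j, ginv n b g i j * F x (b i) y (b j)) = - Ric n b g F x y := by
  simp only [Ric, ← Finset.sum_neg_distrib]
  refine Finset.sum_congr rfl fun i _ => Finset.sum_congr rfl fun j _ => ?_
  rw [hA x (b i) y (b j)]; ring

lemma contract_c (hgs : ∀ x y, g x y = g y x) (hA : ∀ x y z w, F x y z w = - F y x z w)
    (hB : ∀ x y z w, F x y z w + F y z x w + F z x y w = 0) (x y : V₀) :
    (∑ i, ∑ j, ginv n b g i j * F (b i) x (b j) y) = - RicS n b g F x y := by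
  have step : ∀ i j : Fin n, ginv n b g i j * F (b i) x (b j) y
      = -(ginv n b g i j * F x (b j) (b i) y) - ginv n b g i j * F (b j) (b i) x y := by
    intro i j
    have hb := hB (b i) x (b j) y
    have h' : F (b i) x (b j) y = - F x (b j) (b i) y - F (b j) (b i) x y := by linarith
    rw [h']; ring
  rw [Finset.sum_congr rfl fun i _ => Finset.sum_congr rfl fun j _ => step i j]
  simp only [Finset.sum_sub_distrib, Finset.sum_neg_distrib]
  have e1 : (∑ i, ∑ j, ginv n b g i j * F x (b j) (b i) y)
      = ∑ i, ∑ j, ginv n b g i j * F x (b i) (b j) y :=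
    swap_sum n b g hgs fun i j => F x (b j) (b i) y
  have e2 : (∑ i, ∑ j, ginv n b g i j * F (b j) (b i) x y)
      = ∑ i, ∑ j, ginv n b g i j * F (b i) (b j) x y :=
    swap_sum n b g hgs fun i j => F (b j) (b i) x y
  rw [e1, e2, contract12 n b g F hgs hA x y]
  simp only [RicS]
  ring

lemma contract_d (hgs : ∀ x y, g x y = g y x) (hA : ∀ x y z w, F x y z w = - F y x z w)
    (hB : ∀ x y z w, F x y z w + F y z x w + F z x y w = 0) (x y : V₀) :
    (∑ i, ∑ j, ginv n b g i j * F y x (b i) (b j))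
      = Ric n b g F x y - Ric n b g F y x := by
  have step : ∀ i j : Fin n, ginv n b g i j * F y x (b i) (b j)
      = -(ginv n b g i j * F x (b i) y (b j)) - ginv n b g i j * F (b i) y x (b j) := by
    intro i j
    have hb := hB y x (b i) (b j)
    have h' : F y x (b i) (b j) = - F x (b i) y (b j) - F (b i) y x (b j) := by linarith
    rw [h']; ring
  rw [Finset.sum_congr rfl fun i _ => Finset.sum_congr rfl fun j _ => step i j]
  simp only [Finset.sum_sub_distrib, Finset.sum_neg_distrib]
  rw [contract_b n b g F hA x y]
  simp only [Ric]
  ring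

lemma Ric_psi' (hgs : ∀ x y, g x y = g y x) (x y : V₀) :
    Ric n b g (psi F) x y
      = (Ric n b g F x y + Ric n b g F y x + RicS n b g F x y + RicS n b g F y x) / 4 := by
  have expand : ∀ i j : Fin n, ginv n b g i j * psi F (b i) x y (b j)
      = (1/4) * (ginv n b g i j * F (b i) x y (b j))
        + (1/4) * (ginv n b g i j * F x (b i) (b j) y)
        + (1/4) * (ginv n b g i j * F y (b j) (b i) x)
        + (1/4) * (ginv n b g i j * F (b j) y x (b i)) := by
    intro i j; simp only [psi]; ring
  have e3 : (∑ i, ∑ j, ginv n b g i j * F y (b j) (b i) x)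
      = ∑ i, ∑ j, ginv n b g i j * F y (b i) (b j) x :=
    swap_sum n b g hgs fun i j => F y (b j) (b i) x
  have e4 : (∑ i, ∑ j, ginv n b g i j * F (b j) y x (b i))
      = ∑ i, ∑ j, ginv n b g i j * F (b i) y x (b j) :=
    swap_sum n b g hgs fun i j => F (b j) y x (b i)
  have main : Ric n b g (psi F) x y
      = (1/4) * (∑ i, ∑ j, ginv n b g i j * F (b i) x y (b j))
        + (1/4) * (∑ i, ∑ j, ginv n b g i j * F x (b i) (b j) y)
        + (1/4) * (∑ i, ∑ j, ginv n b g i j * F y (b j) (b i) x)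
        + (1/4) * (∑ i, ∑ j, ginv n b g i j * F (b j) y x (b i)) := by
    simp only [Ric]
    rw [Finset.sum_congr rfl fun i _ => Finset.sum_congr rfl fun j _ => expand i j]
    simp only [Finset.sum_add_distrib, ← Finset.mul_sum]
  rw [main, e3, e4]
  simp only [Ric, RicS]
  ring

lemma Ric_mu' (hgs : ∀ x y, g x y = g y x) (hA : ∀ x y z w, F x y z w = - F y x z w)
    (hB : ∀ x y z w, F x y z w + F y z x w + F z x y w = 0) (x y : V₀) :
    Ric n b g (mu F) x y
      = (5 * Ric n b g F x y - Ric n b g F y x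
          - 3 * RicS n b g F x y - RicS n b g F y x) / 8 := by
  have expand : ∀ i j : Fin n, ginv n b g i j * mu F (b i) x y (b j)
      = (3/8) * (ginv n b g i j * F (b i) x y (b j))
        + (3/8) * (ginv n b g i j * F (b i) x (b j) y)
        + (1/8) * (ginv n b g i j * F (b i) (b j) y x)
        + (1/8) * (ginv n b g i j * F (b i) y (b j) x)
        + (1/8) * (ginv n b g i j * F (b j) x y (b i))
        + (1/8) * (ginv n b g i j * F y x (b j) (b i)) := by
    intro i j; simp only [mu]; ring
  have main : Ric n b g (mu F) x y
      = (3/8) * (∑ i, ∑ j, ginv n b g i j * F (b i) x y (b j))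
        + (3/8) * (∑ i, ∑ j, ginv n b g i j * F (b i) x (b j) y)
        + (1/8) * (∑ i, ∑ j, ginv n b g i j * F (b i) (b j) y x)
        + (1/8) * (∑ i, ∑ j, ginv n b g i j * F (b i) y (b j) x)
        + (1/8) * (∑ i, ∑ j, ginv n b g i j * F (b j) x y (b i))
        + (1/8) * (∑ i, ∑ j, ginv n b g i j * F y x (b j) (b i)) := by
    simp only [Ric]
    rw [Finset.sum_congr rfl fun i _ => Finset.sum_congr rfl fun j _ => expand i j]
    simp only [Finset.sum_add_distrib, ← Finset.mul_sum]
  have e5 : (∑ i, ∑ j, ginv n b g i j * F (b j) x y (b i))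
      = ∑ i, ∑ j, ginv n b g i j * F (b i) x y (b j) :=
    swap_sum n b g hgs fun i j => F (b j) x y (b i)
  have e6 : (∑ i, ∑ j, ginv n b g i j * F y x (b j) (b i))
      = ∑ i, ∑ j, ginv n b g i j * F y x (b i) (b j) :=
    swap_sum n b g hgs fun i j => F y x (b j) (b i)
  rw [main, e5, e6, contract_c n b g F hgs hA hB x y,
    contract12 n b g F hgs hA y x, contract_c n b g F hgs hA hB y x,
    contract_d n b g F hgs hA hB x y]
  simp only [Ric]
  ring

end RContract

lemma trg_add' (h k : V₀ → V₀ → ℝ) :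
    trg n b g (h + k) = trg n b g h + trg n b g k := by
  simp only [trg, Pi.add_apply, mul_add, Finset.sum_add_distrib]

lemma trg_sub' (h k : V₀ → V₀ → ℝ) :
    trg n b g (h - k) = trg n b g h - trg n b g k := by
  simp only [trg, Pi.sub_apply, mul_sub, Finset.sum_sub_distrib]

lemma trg_smul' (c : ℝ) (h : V₀ → V₀ → ℝ) :
    trg n b g (c • h) = c * trg n b g h := by
  simp only [trg, Pi.smul_apply, smul_eq_mul, Finset.mul_sum]
  exact Finset.sum_congr rfl fun i _ => Finset.sum_congr rfl fun j _ => by ring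

lemma trg_symB (hgs : ∀ x y, g x y = g y x) (h : V₀ → V₀ → ℝ) :
    trg n b g (symB h) = trg n b g h := by
  have e : (∑ i, ∑ j, ginv n b g i j * h (b j) (b i))
      = ∑ i, ∑ j, ginv n b g i j * h (b i) (b j) :=
    swap_sum n b g hgs fun i j => h (b j) (b i)
  have expand : ∀ i j : Fin n, ginv n b g i j * symB h (b i) (b j)
      = (1/2) * (ginv n b g i j * h (b i) (b j)) + (1/2) * (ginv n b g i j * h (b j) (b i)) := by
    intro i j; simp only [symB]; ring
  have main : trg n b g (symB h)
      = (1/2) * (∑ i, ∑ j, ginv n b g i j * h (b i) (b j))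
        + (1/2) * (∑ i, ∑ j, ginv n b g i j * h (b j) (b i)) := by
    simp only [trg]
    rw [Finset.sum_congr rfl fun i _ => Finset.sum_congr rfl fun j _ => expand i j]
    simp only [Finset.sum_add_distrib, ← Finset.mul_sum]
  rw [main, e, trg]; ring

lemma trg_lamB (hgs : ∀ x y, g x y = g y x) (h : V₀ → V₀ → ℝ) :
    trg n b g (lamB h) = 0 := by
  have e : (∑ i, ∑ j, ginv n b g i j * h (b j) (b i))
      = ∑ i, ∑ j, ginv n b g i j * h (b i) (b j) :=
    swap_sum n b g hgs fun i j => h (b j) (b i)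
  have expand : ∀ i j : Fin n, ginv n b g i j * lamB h (b i) (b j)
      = (1/2) * (ginv n b g i j * h (b i) (b j)) - (1/2) * (ginv n b g i j * h (b j) (b i)) := by
    intro i j; simp only [lamB]; ring
  have main : trg n b g (lamB h)
      = (1/2) * (∑ i, ∑ j, ginv n b g i j * h (b i) (b j))
        - (1/2) * (∑ i, ∑ j, ginv n b g i j * h (b j) (b i)) := by
    simp only [trg]
    rw [Finset.sum_congr rfl fun i _ => Finset.sum_congr rfl fun j _ => expand i j]
    simp only [Finset.sum_sub_distrib, ← Finset.mul_sum]
  rw [main, e]; ring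

lemma trg_zero : trg n b g (fun _ _ => (0 : ℝ)) = 0 := by
  simp [trg]

lemma sum_rot3 (u : Fin n → Fin n → Fin n → ℝ) :
    (∑ j, ∑ a, ∑ c, u j a c) = ∑ a, ∑ c, ∑ j, u j a c := by
  rw [Finset.sum_comm]
  exact Finset.sum_congr rfl fun a _ => Finset.sum_comm

lemma sum_rot3' (u : Fin n → Fin n → Fin n → ℝ) :
    (∑ p, ∑ q, ∑ i, u p q i) = ∑ i, ∑ p, ∑ q, u p q i := by
  have h : ∀ p, (∑ q, ∑ i, u p q i) = ∑ i, ∑ q, u p q i := fun p => Finset.sum_comm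
  simp only [h]
  exact Finset.sum_comm

lemma trg_Ric (F : V₀ → V₀ → V₀ → V₀ → ℝ) :
    trg n b g (Ric n b g F) = tau n b g F := by
  have main : trg n b g (Ric n b g F)
      = ∑ p, ∑ q, ∑ i, ∑ j, ginv n b g p q * (ginv n b g i j * F (b i) (b p) (b q) (b j)) := by
    simp only [trg, Ric, Finset.mul_sum]
  rw [main]
  have h1 : ∀ p, (∑ q, ∑ i, ∑ j, ginv n b g p q * (ginv n b g i j * F (b i) (b p) (b q) (b j)))
      = ∑ i, ∑ q, ∑ j, ginv n b g p q * (ginv n b g i j * F (b i) (b p) (b q) (b j)) :=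
    fun p => Finset.sum_comm
  simp only [h1]
  rw [Finset.sum_comm]
  simp only [tau]
  exact Finset.sum_congr rfl fun i _ => Finset.sum_congr rfl fun p _ =>
    Finset.sum_congr rfl fun q _ => Finset.sum_congr rfl fun j _ => by ring

lemma trg_RicS (F : V₀ → V₀ → V₀ → V₀ → ℝ) :
    trg n b g (RicS n b g F) = tau n b g F := by
  have main : trg n b g (RicS n b g F)
      = ∑ p, ∑ q, ∑ i, ∑ j, ginv n b g p q * (ginv n b g i j * F (b p) (b i) (b j) (b q)) := by
    simp only [trg, RicS, Finset.mul_sum]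
  rw [main]
  have h1 : ∀ p, (∑ q, ∑ i, ∑ j, ginv n b g p q * (ginv n b g i j * F (b p) (b i) (b j) (b q)))
      = ∑ i, ∑ j, ∑ q, ginv n b g p q * (ginv n b g i j * F (b p) (b i) (b j) (b q)) :=
    fun p => sum_rot3 n (fun q i j => ginv n b g p q * (ginv n b g i j * F (b p) (b i) (b j) (b q)))
  simp only [h1]
  simp only [tau]
  exact Finset.sum_congr rfl fun p _ => Finset.sum_congr rfl fun i _ =>
    Finset.sum_congr rfl fun j _ => Finset.sum_congr rfl fun q _ => by ring

lemma isBilin_Ric (F : V₀ → V₀ → V₀ → V₀ → ℝ) (hM : IsMulti4 F) :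
    IsBilin (Ric n b g F) := by
  refine ⟨fun y => ⟨?_, ?_⟩, fun x => ⟨?_, ?_⟩⟩
  · intro x x'
    simp only [Ric]
    rw [← Finset.sum_add_distrib]
    refine Finset.sum_congr rfl fun i _ => ?_
    rw [← Finset.sum_add_distrib]
    refine Finset.sum_congr rfl fun j _ => ?_
    have e : F (b i) (x + x') y (b j) = F (b i) x y (b j) + F (b i) x' y (b j) :=
      (hM.2.1 (b i) y (b j)).1 x x'
    rw [e]; ring
  · intro c x
    simp only [Ric, Finset.mul_sum]
    refine Finset.sum_congr rfl fun i _ => Finset.sum_congr rfl fun j _ => ?_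
    have e : F (b i) (c • x) y (b j) = c * F (b i) x y (b j) :=
      (hM.2.1 (b i) y (b j)).2 c x
    rw [e]; ring
  · intro y y'
    simp only [Ric]
    rw [← Finset.sum_add_distrib]
    refine Finset.sum_congr rfl fun i _ => ?_
    rw [← Finset.sum_add_distrib]
    refine Finset.sum_congr rfl fun j _ => ?_
    have e : F (b i) x (y + y') (b j) = F (b i) x y (b j) + F (b i) x y' (b j) :=
      (hM.2.2.1 (b i) x (b j)).1 y y'
    rw [e]; ring
  · intro c y
    simp only [Ric, Finset.mul_sum]
    refine Finset.sum_congr rfl fun i _ => Finset.sum_congr rfl fun j _ => ?_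
    have e : F (b i) x (c • y) (b j) = c * F (b i) x y (b j) :=
      (hM.2.2.1 (b i) x (b j)).2 c y
    rw [e]; ring

lemma isBilin_RicS (F : V₀ → V₀ → V₀ → V₀ → ℝ) (hM : IsMulti4 F) :
    IsBilin (RicS n b g F) := by
  refine ⟨fun y => ⟨?_, ?_⟩, fun x => ⟨?_, ?_⟩⟩
  · intro x x'
    simp only [RicS]
    rw [← Finset.sum_add_distrib]
    refine Finset.sum_congr rfl fun i _ => ?_
    rw [← Finset.sum_add_distrib]
    refine Finset.sum_congr rfl fun j _ => ?_
    have e : F (x + x') (b i) (b j) y = F x (b i) (b j) y + F x' (b i) (b j) y :=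
      (hM.1 (b i) (b j) y).1 x x'
    rw [e]; ring
  · intro c x
    simp only [RicS, Finset.mul_sum]
    refine Finset.sum_congr rfl fun i _ => Finset.sum_congr rfl fun j _ => ?_
    have e : F (c • x) (b i) (b j) y = c * F x (b i) (b j) y :=
      (hM.1 (b i) (b j) y).2 c x
    rw [e]; ring
  · intro y y'
    simp only [RicS]
    rw [← Finset.sum_add_distrib]
    refine Finset.sum_congr rfl fun i _ => ?_
    rw [← Finset.sum_add_distrib]
    refine Finset.sum_congr rfl fun j _ => ?_
    have e : F x (b i) (b j) (y + y') = F x (b i) (b j) y + F x (b i) (b j) y' :=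
      (hM.2.2.2 x (b i) (b j)).1 y y'
    rw [e]; ring
  · intro c y
    simp only [RicS, Finset.mul_sum]
    refine Finset.sum_congr rfl fun i _ => Finset.sum_congr rfl fun j _ => ?_
    have e : F x (b i) (b j) (c • y) = c * F x (b i) (b j) y :=
      (hM.2.2.2 x (b i) (b j)).2 c y
    rw [e]; ring

lemma isBilin_mix (a₁ a₂ a₃ a₄ : ℝ) {h k : V₀ → V₀ → ℝ}
    (hh : IsBilin h) (hk : IsBilin k) :
    IsBilin (fun x y => a₁ * h x y + a₂ * k x y + a₃ * h y x + a₄ * k y x) := by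
  refine ⟨fun y => ⟨?_, ?_⟩, fun x => ⟨?_, ?_⟩⟩
  · intro x x'
    have e1 : h (x + x') y = h x y + h x' y := (hh.1 y).1 x x'
    have e2 : k (x + x') y = k x y + k x' y := (hk.1 y).1 x x'
    have e3 : h y (x + x') = h y x + h y x' := (hh.2 y).1 x x'
    have e4 : k y (x + x') = k y x + k y x' := (hk.2 y).1 x x'
    simp only []
    rw [e1, e2, e3, e4]; ring
  · intro c x
    have e1 : h (c • x) y = c * h x y := (hh.1 y).2 c x
    have e2 : k (c • x) y = c * k x y := (hk.1 y).2 c x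
    have e3 : h y (c • x) = c * h y x := (hh.2 y).2 c x
    have e4 : k y (c • x) = c * k y x := (hk.2 y).2 c x
    simp only []
    rw [e1, e2, e3, e4]; ring
  · intro y y'
    have e1 : h x (y + y') = h x y + h x y' := (hh.2 x).1 y y'
    have e2 : k x (y + y') = k x y + k x y' := (hk.2 x).1 y y'
    have e3 : h (y + y') x = h y x + h y' x := (hh.1 x).1 y y'
    have e4 : k (y + y') x = k y x + k y' x := (hk.1 x).1 y y'
    simp only []
    rw [e1, e2, e3, e4]; ring
  · intro c y
    have e1 : h x (c • y) = c * h x y := (hh.2 x).2 c y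
    have e2 : k x (c • y) = c * k x y := (hk.2 x).2 c y
    have e3 : h (c • y) x = c * h y x := (hh.1 x).2 c y
    have e4 : k (c • y) x = c * k y x := (hk.1 x).2 c y
    simp only []
    rw [e1, e2, e3, e4]; ring

end Aux

theorem stmt12 {V : Type*} [AddCommGroup V] [Module ℝ V]
    (n : ℕ) (hn : 3 ≤ n) (b : Module.Basis (Fin n) ℝ V)
    (g : V → V → ℝ) (hgb : IsBilin g) (hgs : ∀ x y, g x y = g y x)
    (hgnd : ∀ x : V, (∀ y : V, g x y = 0) → x = 0) :
    ∀ F ∈ rSet V,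
      Ric n b g (al1 n b g F) = ((tau n b g F) / (n : ℝ)) • g ∧
      Ric n b g (al2 n b g F) = (-(tau n b g F) / (n : ℝ)) • g
          + ((1 : ℝ) / 2) • symB (Ric n b g F + RicS n b g F) ∧
      Ric n b g (al3 n b g F) = ((1 : ℝ) / 2) • symB (Ric n b g F - RicS n b g F) ∧
      Ric n b g (al4 n b g F) = ((1 : ℝ) / 4) • lamB ((3 : ℝ) • Ric n b g F - RicS n b g F) ∧
      Ric n b g (al5 n b g F) = ((1 : ℝ) / 4) • lamB (Ric n b g F + RicS n b g F) ∧
      Ric n b g (al6 n b g F) = 0 ∧ Ric n b g (al7 n b g F) = 0 ∧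
      Ric n b g (al8 n b g F) = 0 ∧
      trg n b g (Ric n b g (al2 n b g F)) = 0 ∧ trg n b g (Ric n b g (al3 n b g F)) = 0 ∧
      trg n b g (Ric n b g (al4 n b g F)) = 0 ∧ trg n b g (Ric n b g (al5 n b g F)) = 0 ∧
      trg n b g (Ric n b g (al6 n b g F)) = 0 ∧ trg n b g (Ric n b g (al7 n b g F)) = 0 ∧
      trg n b g (Ric n b g (al8 n b g F)) = 0 := by
  intro F hF
  obtain ⟨hM, hA, hB⟩ := hF
  have h3 : (3:ℝ) ≤ (n:ℝ) := by exact_mod_cast hn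
  have hn0 : (n:ℝ) ≠ 0 := by intro h; linarith
  have hn1 : (n:ℝ) - 1 ≠ 0 := by intro h; linarith
  have hn2 : (n:ℝ) - 2 ≠ 0 := by intro h; linarith
  have hp2 : (n:ℝ) + 2 ≠ 0 := by intro h; linarith
  have hbA : IsBilin (Ric n b g F) := isBilin_Ric n b g F hM
  have hbB : IsBilin (RicS n b g F) := isBilin_RicS n b g F hM
  have hSsum : IsBilin (symB (Ric n b g F + RicS n b g F)) := by
    have e : symB (Ric n b g F + RicS n b g F)
        = fun x y => (1/2) * Ric n b g F x y + (1/2) * RicS n b g F x y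
            + (1/2) * Ric n b g F y x + (1/2) * RicS n b g F y x := by
      funext x y; simp only [symB, Pi.add_apply]; ring
    rw [e]; exact isBilin_mix (1/2) (1/2) (1/2) (1/2) hbA hbB
  have hSdif : IsBilin (symB (Ric n b g F - RicS n b g F)) := by
    have e : symB (Ric n b g F - RicS n b g F)
        = fun x y => (1/2) * Ric n b g F x y + (-(1/2)) * RicS n b g F x y
            + (1/2) * Ric n b g F y x + (-(1/2)) * RicS n b g F y x := by
      funext x y; simp only [symB, Pi.sub_apply]; ring
    rw [e]; exact isBilin_mix (1/2) (-(1/2)) (1/2) (-(1/2)) hbA hbB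
  have hL1 : IsBilin (lamB ((3:ℝ) • Ric n b g F - RicS n b g F)) := by
    have e : lamB ((3:ℝ) • Ric n b g F - RicS n b g F)
        = fun x y => (3/2) * Ric n b g F x y + (-(1/2)) * RicS n b g F x y
            + (-(3/2)) * Ric n b g F y x + (1/2) * RicS n b g F y x := by
      funext x y
      simp only [lamB, Pi.sub_apply, Pi.smul_apply, smul_eq_mul]; ring
    rw [e]; exact isBilin_mix (3/2) (-(1/2)) (-(3/2)) (1/2) hbA hbB
  have hL2 : IsBilin (lamB (Ric n b g F + RicS n b g F)) := by
    have e : lamB (Ric n b g F + RicS n b g F)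
        = fun x y => (1/2) * Ric n b g F x y + (1/2) * RicS n b g F x y
            + (-(1/2)) * Ric n b g F y x + (-(1/2)) * RicS n b g F y x := by
      funext x y; simp only [lamB, Pi.add_apply]; ring
    rw [e]; exact isBilin_mix (1/2) (1/2) (-(1/2)) (-(1/2)) hbA hbB
  have tg : trg n b g g = (n:ℝ) := trace_g n b g hgb hgs hgnd
  have tS : trg n b g (symB (Ric n b g F + RicS n b g F)) = 2 * tau n b g F := by
    rw [trg_symB n b g hgs, trg_add' n b g, trg_Ric n b g F, trg_RicS n b g F]; ring
  have tSd : trg n b g (symB (Ric n b g F - RicS n b g F)) = 0 := by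
    rw [trg_symB n b g hgs, trg_sub' n b g, trg_Ric n b g F, trg_RicS n b g F]; ring
  have tL1 : trg n b g (lamB ((3:ℝ) • Ric n b g F - RicS n b g F)) = 0 :=
    trg_lamB n b g hgs _
  have tL2 : trg n b g (lamB (Ric n b g F + RicS n b g F)) = 0 :=
    trg_lamB n b g hgs _
  have lam_anti : ∀ (h : V → V → ℝ) (x y : V), lamB h y x = - lamB h x y := by
    intro h x y; simp only [lamB]; ring
  have H1p : ∀ x y : V, Ric n b g (al1 n b g F) x y = (tau n b g F / (n:ℝ)) * g x y := by
    intro x y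
    simp only [al1]
    rw [Ric_smul', Ric_wedge' n b g hgb hgs hgnd 0 g hgb x y]
    field_simp
    ring
  have H2p : ∀ x y : V, Ric n b g (al2 n b g F) x y
      = (-(tau n b g F) / (n:ℝ)) * g x y
        + (1/2) * symB (Ric n b g F + RicS n b g F) x y := by
    intro x y
    simp only [al2]
    rw [Ric_add', Ric_smul', Ric_smul',
      Ric_wedge' n b g hgb hgs hgnd 1 _ hSsum x y,
      Ric_wedge' n b g hgb hgs hgnd 0 g hgb x y, tS]
    field_simp
    ring
  have H3p : ∀ x y : V, Ric n b g (al3 n b g F) x y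
      = (1/2) * symB (Ric n b g F - RicS n b g F) x y := by
    intro x y
    simp only [al3]
    rw [Ric_smul', Ric_wedge' n b g hgb hgs hgnd (-1) _ hSdif x y, tSd]
    field_simp
    ring
  have H4p : ∀ x y : V, Ric n b g (al4 n b g F) x y
      = (1/4) * lamB ((3:ℝ) • Ric n b g F - RicS n b g F) x y := by
    intro x y
    simp only [al4]
    rw [Ric_smul', Ric_add', Ric_smul',
      Ric_prodB' n b g hgb hgs hgnd _ hL1 x y,
      Ric_wedge' n b g hgb hgs hgnd (-1) _ hL1 x y, tL1,
      lam_anti _ x y]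
    field_simp
    ring
  have H5p : ∀ x y : V, Ric n b g (al5 n b g F) x y
      = (1/4) * lamB (Ric n b g F + RicS n b g F) x y := by
    intro x y
    simp only [al5]
    rw [Ric_smul', Ric_add', Ric_smul',
      Ric_prodB' n b g hgb hgs hgnd _ hL2 x y,
      Ric_wedge' n b g hgb hgs hgnd 3 _ hL2 x y, tL2,
      lam_anti _ x y]
    field_simp
    ring
  have H6p : ∀ x y : V, Ric n b g (al6 n b g F) x y = 0 := by
    intro x y
    simp only [al6]
    rw [Ric_sub', Ric_sub', Ric_psi' n b g F hgs x y, H1p x y, H2p x y]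
    simp only [symB, Pi.add_apply]
    ring
  have H7p : ∀ x y : V, Ric n b g (al7 n b g F) x y = 0 := by
    intro x y
    simp only [al7]
    rw [Ric_sub', Ric_sub', Ric_mu' n b g F hgs hA hB x y, H3p x y, H4p x y]
    simp only [symB, lamB, Pi.sub_apply, Pi.add_apply, Pi.smul_apply, smul_eq_mul]
    ring
  have H8p : ∀ x y : V, Ric n b g (al8 n b g F) x y = 0 := by
    intro x y
    simp only [al8]
    rw [Ric_sub', Ric_sub', Ric_sub', Ric_mu' n b g F hgs hA hB x y,
      Ric_psi' n b g F hgs x y, H5p x y]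
    simp only [lamB, Pi.add_apply]
    ring
  have H1 : Ric n b g (al1 n b g F) = ((tau n b g F) / (n:ℝ)) • g := funext fun x => funext fun y => H1p x y
  have H2 : Ric n b g (al2 n b g F) = (-(tau n b g F) / (n:ℝ)) • g
      + ((1:ℝ)/2) • symB (Ric n b g F + RicS n b g F) := funext fun x => funext fun y => H2p x y
  have H3 : Ric n b g (al3 n b g F) = ((1:ℝ)/2) • symB (Ric n b g F - RicS n b g F) :=
    funext fun x => funext fun y => H3p x y
  have H4 : Ric n b g (al4 n b g F)
      = ((1:ℝ)/4) • lamB ((3:ℝ) • Ric n b g F - RicS n b g F) :=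
    funext fun x => funext fun y => H4p x y
  have H5 : Ric n b g (al5 n b g F) = ((1:ℝ)/4) • lamB (Ric n b g F + RicS n b g F) :=
    funext fun x => funext fun y => H5p x y
  have H6 : Ric n b g (al6 n b g F) = 0 := funext fun x => funext fun y => H6p x y
  have H7 : Ric n b g (al7 n b g F) = 0 := funext fun x => funext fun y => H7p x y
  have H8 : Ric n b g (al8 n b g F) = 0 := funext fun x => funext fun y => H8p x y
  have tzero : trg n b g (0 : V → V → ℝ) = 0 := by simp [trg]
  have T2 : trg n b g (Ric n b g (al2 n b g F)) = 0 := by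
    rw [H2, trg_add' n b g, trg_smul' n b g, trg_smul' n b g, tS, tg]
    field_simp
    ring
  have T3 : trg n b g (Ric n b g (al3 n b g F)) = 0 := by
    rw [H3, trg_smul' n b g, tSd]; ring
  have T4 : trg n b g (Ric n b g (al4 n b g F)) = 0 := by
    rw [H4, trg_smul' n b g, tL1]; ring
  have T5 : trg n b g (Ric n b g (al5 n b g F)) = 0 := by
    rw [H5, trg_smul' n b g, tL2]; ring
  have T6 : trg n b g (Ric n b g (al6 n b g F)) = 0 := by rw [H6]; exact tzero
  have T7 : trg n b g (Ric n b g (al7 n b g F)) = 0 := by rw [H7]; exact tzero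
  have T8 : trg n b g (Ric n b g (al8 n b g F)) = 0 := by rw [H8]; exact tzero
  exact ⟨H1, H2, H3, H4, H5, H6, H7, H8, T2, T3, T4, T5, T6, T7, T8⟩


end GCT
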